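/- For elements a, b of a ring R and non-negative integers r and s with r ≥ 1, the iterated commutator [a^r, b]_s can be written as an integer linear combination of products [a,b]_{w_1} · [a,b]_{w_2} ⋯ [a,b]_{w_r} over tuples (w_1, ..., w_r) with 0 ≤ w_i ≤ s. -/
import Mathlib


/-- Iterated commutator: `itc a b 0 = a`, `itc a b (k+1) = [itc a b k, b]`. -/
def itc {R : Type*} [Ring R] (a b : R) : ℕ → R
  | 0 => a
  | k + 1 => itc a b k * b - b * itc a b k

section Aux

variable {R : Type*} [Ring R]

/-- The commutator-with-`b` map as a `ℤ`-linear map. -/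
private def Dmap (b : R) : R →ₗ[ℤ] R := LinearMap.mulRight ℤ b - LinearMap.mulLeft ℤ b

private lemma Dmap_apply (b x : R) : Dmap b x = x * b - b * x := rfl

private lemma Dmap_mul (b x y : R) : Dmap b (x * y) = Dmap b x * y + x * Dmap b y := by
  simp only [Dmap_apply]; noncomm_ring

private lemma itc_succ (a b : R) (k : ℕ) : itc a b (k + 1) = Dmap b (itc a b k) := rfl

/-- Integer span of products of length `r` of iterated commutators of depth `≤ s`. -/
private def Vmod (a b : R) (r s : ℕ) : Submodule ℤ R :=
  Submodule.span ℤ (Set.range fun w : Fin r → Fin (s + 1) =>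
    (List.ofFn fun i => itc a b (w i)).prod)

private lemma gen_mem (a b : R) {r s : ℕ} (w : Fin r → Fin (s + 1)) :
    (List.ofFn fun i => itc a b ((w i : ℕ))).prod ∈ Vmod a b r s :=
  Submodule.subset_span ⟨w, rfl⟩

private lemma mul_mem_V (a b : R) {r s : ℕ} (k : Fin (s + 1)) {x : R}
    (hx : x ∈ Vmod a b r s) : itc a b k * x ∈ Vmod a b (r + 1) s := by
  induction hx using Submodule.span_induction with
  | mem x hx =>
    obtain ⟨w, rfl⟩ := hx
    have : itc a b k * (List.ofFn fun i => itc a b (w i)).prod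
        = (List.ofFn fun i => itc a b ((Fin.cons k w : Fin (r+1) → Fin (s+1)) i)).prod := by
      simp [List.ofFn_succ, Fin.cons_zero, Fin.cons_succ]
    rw [this]
    exact gen_mem a b _
  | zero => simpa using (Vmod a b (r + 1) s).zero_mem
  | add x y _ _ hx hy => rw [mul_add]; exact (Vmod a b (r + 1) s).add_mem hx hy
  | smul c x _ hx => rw [mul_smul_comm]; exact (Vmod a b (r + 1) s).smul_mem c hx

private lemma D_gen (a b : R) : ∀ (r : ℕ) {s : ℕ} (w : Fin r → Fin (s + 1)),
    Dmap b ((List.ofFn fun i => itc a b (w i)).prod) ∈ Vmod a b r (s + 1)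
  | 0, s, w => by
    simp only [List.ofFn_zero, List.prod_nil, Dmap_apply]
    simpa using (Vmod a b 0 (s + 1)).zero_mem
  | r + 1, s, w => by
    rw [List.ofFn_succ, List.prod_cons, Dmap_mul]
    refine (Vmod a b (r + 1) (s + 1)).add_mem ?_ ?_
    · have h1 : Dmap b (itc a b (w 0)) = itc a b (((w 0).succ : Fin (s + 2)) : ℕ) := by
        rw [Fin.val_succ, itc_succ]
      have h2 : (List.ofFn fun i : Fin r => itc a b ((w i.succ : ℕ)))
          = List.ofFn fun i : Fin r => itc a b (((w i.succ).castSucc : Fin (s+2)) : ℕ) := by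
        simp
      rw [h1, h2]
      exact mul_mem_V a b _ (gen_mem a b fun i => (w i.succ).castSucc)
    · have h1 : itc a b ((w 0 : ℕ)) = itc a b (((w 0).castSucc : Fin (s + 2)) : ℕ) := by simp
      rw [h1]
      exact mul_mem_V a b _ (D_gen a b r fun i => w i.succ)

private lemma D_mem (a b : R) {r s : ℕ} {x : R} (hx : x ∈ Vmod a b r s) :
    Dmap b x ∈ Vmod a b r (s + 1) := by
  induction hx using Submodule.span_induction with
  | mem x hx => obtain ⟨w, rfl⟩ := hx; exact D_gen a b r w
  | zero => simpa using (Vmod a b r (s + 1)).zero_mem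
  | add x y _ _ hx hy => rw [map_add]; exact (Vmod a b r (s + 1)).add_mem hx hy
  | smul c x _ hx => rw [map_smul]; exact (Vmod a b r (s + 1)).smul_mem c hx

private lemma itc_pow_mem (a b : R) (r s : ℕ) : itc (a ^ r) b s ∈ Vmod a b r s := by
  induction s with
  | zero =>
    have : itc (a ^ r) b 0 = (List.ofFn fun i : Fin r =>
        itc a b (((0 : Fin 1) : ℕ))).prod := by
      simp [itc, List.ofFn_const]
    rw [this]
    exact gen_mem a b fun _ => 0
  | succ s ih =>
    rw [itc_succ]
    exact D_mem a b ih

end Aux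

/-- `[a^r, b]_s` is an integer linear combination of ordered products
`[a,b]_{w_1} ⋯ [a,b]_{w_r}` over tuples `w` with `0 ≤ w_i ≤ s`. -/
theorem stmt_1 {R : Type*} [Ring R] (a b : R) (r s : ℕ) (hr : 1 ≤ r) :
    ∃ E : (Fin r → Fin (s + 1)) → ℤ, itc (a ^ r) b s =
      ∑ w : Fin r → Fin (s + 1),
        E w • (List.ofFn fun i => itc a b (w i)).prod := by
  have h := itc_pow_mem a b r s
  rw [Vmod, Submodule.mem_span_range_iff_exists_fun] at h
  obtain ⟨c, hc⟩ := h
  exact ⟨c, hc.symm⟩
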